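/- arXiv:2412.10088 — 3 statements merged into one kernel-verified Lean document; each statement's English description precedes it below -/
import Mathlib

section
/- Let Υ solve ΥA + RC = QΥ, let x(t) = e^{At} B e_j (the impulse response with input direction e_j starting from x(0⁻)=0), and let ϖ solve ϖ̇ = Qϖ + RCx with ϖ(0) = 0, x(0) = B e_j. Then ϖ(t) + Υx(t) = e^{Qt} Υ B e_j for all t ≥ 0. -/
open Matrix

attribute [local instance 2000] Matrix.linftyOpNormedAddCommGroup Matrix.linftyOpNormedSpace
  Matrix.linftyOpNormedRing Matrix.linftyOpNormedAlgebra

/-- `M ↦ (v ↦ M *ᵥ v)` bundled as a linear map into continuous linear maps. -/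
noncomputable def mulVecCLML {k l : ℕ} :
    Matrix (Fin k) (Fin l) ℝ →ₗ[ℝ] ((Fin l → ℝ) →L[ℝ] (Fin k → ℝ)) where
  toFun M := LinearMap.toContinuousLinearMap M.mulVecLin
  map_add' M N := by ext v i; simp [Matrix.add_mulVec]
  map_smul' c M := by ext v i; simp [Matrix.smul_mulVec]

@[simp] lemma mulVecCLML_apply {k l : ℕ} (M : Matrix (Fin k) (Fin l) ℝ) (v : Fin l → ℝ) :
    mulVecCLML M v = M *ᵥ v := rfl

/-- Product rule for `fun s => M s *ᵥ v s`. -/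
lemma HasDerivAt.matrix_mulVec {k l : ℕ} {M : ℝ → Matrix (Fin k) (Fin l) ℝ}
    {M' : Matrix (Fin k) (Fin l) ℝ} {v : ℝ → Fin l → ℝ} {v' : Fin l → ℝ} {t : ℝ}
    (hM : HasDerivAt M M' t) (hv : HasDerivAt v v' t) :
    HasDerivAt (fun s => M s *ᵥ v s) (M' *ᵥ v t + M t *ᵥ v') t := by
  have h1 : HasDerivAt (fun s => mulVecCLML (M s)) (mulVecCLML M') t :=
    (LinearMap.toContinuousLinearMap mulVecCLML).hasFDerivAt.comp_hasDerivAt t hM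
  simpa using h1.clm_apply hv

/-- Impulse response through the swapped filter: with `x(t) = e^{At} B e_j` and
`ϖ(0) = 0`, one has `ϖ(t) + Υx(t) = e^{Qt} Υ B e_j` for all `t ≥ 0`. -/
theorem swapped_impulse_response {n ν m p : ℕ}
    (A : Matrix (Fin n) (Fin n) ℝ) (B : Matrix (Fin n) (Fin m) ℝ)
    (C : Matrix (Fin p) (Fin n) ℝ)
    (Q : Matrix (Fin ν) (Fin ν) ℝ) (R : Matrix (Fin ν) (Fin p) ℝ)
    (U : Matrix (Fin ν) (Fin n) ℝ) (hU : U * A + R * C = Q * U)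
    (j : Fin m)
    (x : ℝ → Fin n → ℝ) (ϖ : ℝ → Fin ν → ℝ)
    (hx : ∀ t, x t = NormedSpace.exp (t • A) *ᵥ (B *ᵥ Pi.single j 1))
    (hϖ : ∀ t, HasDerivAt ϖ (Q *ᵥ ϖ t + R *ᵥ (C *ᵥ x t)) t)
    (hϖ0 : ϖ 0 = 0) :
    ∀ t : ℝ, 0 ≤ t →
      ϖ t + U *ᵥ x t = NormedSpace.exp (t • Q) *ᵥ (U *ᵥ (B *ᵥ Pi.single j 1)) := by
  intro t _
  set c : Fin n → ℝ := B *ᵥ Pi.single j 1 with hc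
  -- derivative of x
  have hxd : ∀ s : ℝ, HasDerivAt x (A *ᵥ x s) s := by
    intro s
    have hE : HasDerivAt (fun u : ℝ => NormedSpace.exp (u • A))
        (A * NormedSpace.exp (s • A)) s := hasDerivAt_exp_smul_const' A s
    have := hE.matrix_mulVec (hasDerivAt_const s c)
    simp only [mulVec_zero, add_zero] at this
    have hfun : (fun u : ℝ => NormedSpace.exp (u • A) *ᵥ c) = x := by
      funext u; rw [hx u]
    rw [hfun] at this
    rw [hx s, mulVec_mulVec]
    exact this
  -- z = ϖ + U x satisfies z' = Q z
  set z : ℝ → Fin ν → ℝ := fun s => ϖ s + U *ᵥ x s with hz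
  have hzd : ∀ s : ℝ, HasDerivAt z (Q *ᵥ z s) s := by
    intro s
    have hUx : HasDerivAt (fun u => U *ᵥ x u) (U *ᵥ (A *ᵥ x s)) s := by
      have := (hasDerivAt_const s U).matrix_mulVec (hxd s)
      simpa using this
    have := (hϖ s).add hUx
    convert this using 1
    case e'_4 => rfl
    case e'_5 => rfl
    case e'_6 => rfl
    case e'_8 => rfl
    have hQU : Q * U = U * A + R * C := hU.symm
    rw [hz]
    simp only [mulVec_add, mulVec_mulVec]
    rw [hQU]
    simp only [add_mulVec, ← mulVec_mulVec]
    abel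
  -- w s = exp (s • (-Q)) *ᵥ z s is constant
  have hcomm : ∀ s : ℝ, NormedSpace.exp (s • (-Q)) * Q = Q * NormedSpace.exp (s • (-Q)) := by
    intro s
    exact (((Commute.refl Q).neg_left.smul_left s).exp_left).eq
  set w : ℝ → Fin ν → ℝ := fun s => NormedSpace.exp (s • (-Q)) *ᵥ z s with hw
  have hwd : ∀ s : ℝ, HasDerivAt w 0 s := by
    intro s
    have hE : HasDerivAt (fun u : ℝ => NormedSpace.exp (u • (-Q)))
        ((-Q) * NormedSpace.exp (s • (-Q))) s := hasDerivAt_exp_smul_const' (-Q) s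
    have := hE.matrix_mulVec (hzd s)
    convert this using 1
    rw [mulVec_mulVec, ← add_mulVec]
    have : -Q * NormedSpace.exp (s • (-Q)) + NormedSpace.exp (s • (-Q)) * Q = 0 := by
      rw [hcomm s, neg_mul]; abel
    rw [this, zero_mulVec]
  have hwconst : ∀ s : ℝ, w s = w 0 := by
    intro s
    have hdiff : Differentiable ℝ w := fun u => (hwd u).differentiableAt
    have hderiv : ∀ u : ℝ, deriv w u = 0 := fun u => (hwd u).deriv
    exact is_const_of_deriv_eq_zero hdiff hderiv s 0
  -- compute w 0 = z 0 = U *ᵥ c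
  have hw0 : w 0 = U *ᵥ c := by
    rw [hw]
    simp only [zero_smul, NormedSpace.exp_zero, one_mulVec, hz]
    rw [hϖ0, hx 0]
    simp [NormedSpace.exp_zero]
  -- invert the exponential
  have hinv : NormedSpace.exp (t • Q) * NormedSpace.exp (t • (-Q)) = 1 := by
    erw [← NormedSpace.exp_add_of_commute]
    · simp
    · rw [smul_neg]; exact (Commute.refl (t • Q)).neg_right
  have : NormedSpace.exp (t • Q) *ᵥ w t = z t := by
    rw [hw, mulVec_mulVec, hinv, one_mulVec]
  show z t = NormedSpace.exp (t • Q) *ᵥ (U *ᵥ c)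
  rw [← this, hwconst t, hw0]
end

section
/- Left-interpolation analogue: if Υ solves ΥA + RC = QΥ, q₀ ∈ ℂ is an eigenvalue of Qᵀ with left eigenvector w (wᵀQ = q₀wᵀ), and q₀ ∉ σ(A), then wᵀ R C (q₀ I − A)^{-1} B = wᵀ Υ B. -/
open Matrix

/-- Left moment matching: if `Υ` solves `ΥA + RC = QΥ`, `wᵀQ = q₀wᵀ` with
`q₀ ∉ σ(A)`, then `wᵀRC(q₀I − A)⁻¹B = wᵀΥB`. -/
theorem left_moment_matching {n ν m p : ℕ}
    (A : Matrix (Fin n) (Fin n) ℂ) (B : Matrix (Fin n) (Fin m) ℂ)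
    (C : Matrix (Fin p) (Fin n) ℂ) (Q : Matrix (Fin ν) (Fin ν) ℂ)
    (R : Matrix (Fin ν) (Fin p) ℂ)
    (U : Matrix (Fin ν) (Fin n) ℂ) (hU : U * A + R * C = Q * U)
    (q₀ : ℂ) (hq : q₀ ∉ spectrum ℂ A)
    (w : Fin ν → ℂ) (hw : w ≠ 0) (hwQ : w ᵥ* Q = q₀ • w) :
    w ᵥ* (R * C * (q₀ • (1 : Matrix (Fin n) (Fin n) ℂ) - A)⁻¹ * B) = w ᵥ* (U * B) := by
  set M : Matrix (Fin n) (Fin n) ℂ := q₀ • (1 : Matrix (Fin n) (Fin n) ℂ) - A with hM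
  have hunit : IsUnit M := by
    have := spectrum.notMem_iff.mp hq
    simpa [hM, Algebra.algebraMap_eq_smul_one] using this
  have hinv : M * M⁻¹ = 1 := Matrix.mul_nonsing_inv _ ((Matrix.isUnit_iff_isUnit_det M).mp hunit)
  have key : w ᵥ* (R * C) = w ᵥ* (U * M) := by
    have h1 : w ᵥ* (Q * U) = q₀ • (w ᵥ* U) := by
      rw [← Matrix.vecMul_vecMul, hwQ]
      exact Matrix.smul_vecMul q₀ w U
    have h2 : w ᵥ* (U * A + R * C) = w ᵥ* (Q * U) := by rw [hU]
    rw [Matrix.vecMul_add, h1] at h2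
    have h3 : w ᵥ* (R * C) = q₀ • (w ᵥ* U) - w ᵥ* (U * A) := by
      rw [← h2]; abel
    rw [h3, hM, Matrix.mul_sub, Matrix.vecMul_sub, Matrix.mul_smul, Matrix.mul_one]
    congr 1
    ext j
    simp [Matrix.vecMul, dotProduct, Finset.mul_sum, mul_left_comm]
  calc w ᵥ* (R * C * M⁻¹ * B)
      = w ᵥ* (R * C) ᵥ* M⁻¹ ᵥ* B := by
        simp [Matrix.vecMul_vecMul, Matrix.mul_assoc]
    _ = w ᵥ* (U * M) ᵥ* M⁻¹ ᵥ* B := by rw [key]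
    _ = w ᵥ* (U * B) := by
        rw [Matrix.vecMul_vecMul, Matrix.vecMul_vecMul, Matrix.mul_assoc U M,
          ← Matrix.mul_assoc M M⁻¹ B, hinv, Matrix.one_mul]
end

section
/- Two-sided reduced model matches right interpolation data: assume Π solves AΠ + BL = ΠS, Υ solves ΥA + RC = QΥ, and ΥΠ is invertible. Set G = (ΥΠ)^{-1}ΥB, F = S − GL, and let s₀ be an eigenvalue of S with Sv = s₀v and s₀ ∉ σ(A) ∪ σ(F). Define the reduced transfer map Ŵ(s) = CΠ(sI − F)^{-1}G. Then Ŵ(s₀)Lv = C(s₀I − A)^{-1}BLv. -/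
open Matrix

/-- The two-sided reduced model matches the right interpolation data:
`Ŵ(s₀)Lv = C(s₀I − A)⁻¹BLv` whenever `Sv = s₀v`. -/
theorem twosided_right_matching {n ν m p : ℕ}
    (A : Matrix (Fin n) (Fin n) ℂ) (B : Matrix (Fin n) (Fin m) ℂ)
    (C : Matrix (Fin p) (Fin n) ℂ) (S Q : Matrix (Fin ν) (Fin ν) ℂ)
    (L : Matrix (Fin m) (Fin ν) ℂ) (R : Matrix (Fin ν) (Fin p) ℂ)
    (P : Matrix (Fin n) (Fin ν) ℂ) (U : Matrix (Fin ν) (Fin n) ℂ)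
    (hP : A * P + B * L = P * S) (hU : U * A + R * C = Q * U)
    (hInv : IsUnit (U * P))
    (G : Matrix (Fin ν) (Fin m) ℂ) (hG : G = (U * P)⁻¹ * (U * B))
    (F : Matrix (Fin ν) (Fin ν) ℂ) (hF : F = S - G * L)
    (s₀ : ℂ) (hsA : s₀ ∉ spectrum ℂ A) (hsF : s₀ ∉ spectrum ℂ F)
    (v : Fin ν → ℂ) (hv : v ≠ 0) (hSv : S *ᵥ v = s₀ • v) :
    (C * P * (s₀ • (1 : Matrix (Fin ν) (Fin ν) ℂ) - F)⁻¹ * G * L) *ᵥ v =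
      (C * (s₀ • (1 : Matrix (Fin n) (Fin n) ℂ) - A)⁻¹ * (B * L)) *ᵥ v := by
  have hFu : IsUnit (s₀ • (1 : Matrix (Fin ν) (Fin ν) ℂ) - F) := by
    have := spectrum.notMem_iff.mp hsF
    rwa [Algebra.algebraMap_eq_smul_one] at this
  have hAu : IsUnit (s₀ • (1 : Matrix (Fin n) (Fin n) ℂ) - A) := by
    have := spectrum.notMem_iff.mp hsA
    rwa [Algebra.algebraMap_eq_smul_one] at this
  -- key identity 1 : (s₀I − F) v = G L v
  have key1 : (s₀ • (1 : Matrix (Fin ν) (Fin ν) ℂ) - F) *ᵥ v = (G * L) *ᵥ v := by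
    rw [hF, sub_mulVec, sub_mulVec, smul_mulVec, one_mulVec, hSv]
    abel
  -- hence the resolvent maps GLv back to v
  have res1 : (s₀ • (1 : Matrix (Fin ν) (Fin ν) ℂ) - F)⁻¹ *ᵥ ((G * L) *ᵥ v) = v := by
    rw [← key1, mulVec_mulVec, nonsing_inv_mul _ ((isUnit_iff_isUnit_det _).mp hFu),
      one_mulVec]
  -- key identity 2 : (s₀I − A) (P v) = B L v
  have key2 : (s₀ • (1 : Matrix (Fin n) (Fin n) ℂ) - A) *ᵥ (P *ᵥ v) = (B * L) *ᵥ v := by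
    have h := congrArg (fun M => M *ᵥ v) hP
    simp only [add_mulVec] at h
    have hPS : (P * S) *ᵥ v = s₀ • (P *ᵥ v) := by
      rw [← mulVec_mulVec, hSv, mulVec_smul]
    rw [hPS] at h
    rw [sub_mulVec, smul_mulVec, one_mulVec, mulVec_mulVec]
    rw [← h]
    abel
  have res2 : (s₀ • (1 : Matrix (Fin n) (Fin n) ℂ) - A)⁻¹ *ᵥ ((B * L) *ᵥ v) = P *ᵥ v := by
    rw [← key2, mulVec_mulVec, nonsing_inv_mul _ ((isUnit_iff_isUnit_det _).mp hAu),
      one_mulVec]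
  calc (C * P * (s₀ • (1 : Matrix (Fin ν) (Fin ν) ℂ) - F)⁻¹ * G * L) *ᵥ v
      = (C * P) *ᵥ ((s₀ • (1 : Matrix (Fin ν) (Fin ν) ℂ) - F)⁻¹ *ᵥ ((G * L) *ᵥ v)) := by
        simp [mulVec_mulVec, Matrix.mul_assoc]
    _ = (C * P) *ᵥ v := by rw [res1]
    _ = C *ᵥ (P *ᵥ v) := by rw [mulVec_mulVec]
    _ = C *ᵥ ((s₀ • (1 : Matrix (Fin n) (Fin n) ℂ) - A)⁻¹ *ᵥ ((B * L) *ᵥ v)) := by rw [res2]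
    _ = (C * (s₀ • (1 : Matrix (Fin n) (Fin n) ℂ) - A)⁻¹ * (B * L)) *ᵥ v := by
        simp [mulVec_mulVec, Matrix.mul_assoc]
end
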